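/- With the pointwise hypersurface model below, suppose α ≠ 0, β ≠ 0, c ≠ 0, δ = 0, μ = −c/(4α), and the structure Jacobi operator l is pseudo-parallel with function value L ∈ ℝ. Then γ = β²/α − c/(4α), and consequently l(X) = 0 for every X ∈ V. (This is the pointwise content of the proof of Lemma 4.3.) -/

import Mathlib

open scoped RealInnerProductSpace

theorem pseudo_parallel_structure_jacobi_vanishes
    {V : Type*} [NormedAddCommGroup V] [InnerProductSpace ℝ V]
    (hdim : Module.finrank ℝ V = 3)
    (u w x : V) (hon : Orthonormal ℝ ![u, w, x])
    (φ : V →ₗ[ℝ] V) (hφu : φ u = w) (hφw : φ w = -u) (hφx : φ x = 0)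
    (A : V →ₗ[ℝ] V) (hA : ∀ X Y : V, ⟪A X, Y⟫ = ⟪X, A Y⟫)
    (α β γ δ μ c L : ℝ)
    (hAu : A u = γ • u + δ • w + β • x)
    (hAw : A w = δ • u + μ • w)
    (hAx : A x = α • x + β • u)
    (R : V → V → V → V)
    (hR : ∀ X Y Z : V, R X Y Z =
      (c / 4) • (⟪Y, Z⟫ • X - ⟪X, Z⟫ • Y + ⟪φ Y, Z⟫ • φ X
        - ⟪φ X, Z⟫ • φ Y - (2 * ⟪φ X, Y⟫) • φ Z)
      + ⟪A Y, Z⟫ • A X - ⟪A X, Z⟫ • A Y)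
    (l : V → V) (hl : ∀ X : V, l X = R X x x)
    (hpp : ∀ X Y Z : V,
      R X Y (l Z) - l (R X Y Z)
        = L • ((⟪Y, l Z⟫ • X - ⟪l Z, X⟫ • Y)
            - l (⟪Y, Z⟫ • X - ⟪Z, X⟫ • Y)))
    (hα : α ≠ 0)
    (hβ : β ≠ 0)
    (hc : c ≠ 0)
    (hδ : δ = 0)
    (hμ : μ = -c / (4 * α)) :
    γ = β ^ 2 / α - c / (4 * α) ∧ ∀ X : V, l X = 0 := by
  subst hδ
  have hio := orthonormal_iff_ite.mp hon
  have huu : ⟪u,u⟫ = 1 := by simpa using hio 0 0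
  have huw : ⟪u,w⟫ = 0 := by simpa using hio 0 1
  have hux : ⟪u,x⟫ = 0 := by simpa using hio 0 2
  have hwu : ⟪w,u⟫ = 0 := by simpa using hio 1 0
  have hww : ⟪w,w⟫ = 1 := by simpa using hio 1 1
  have hwx : ⟪w,x⟫ = 0 := by simpa using hio 1 2
  have hxu : ⟪x,u⟫ = 0 := by simpa using hio 2 0
  have hxw : ⟪x,w⟫ = 0 := by simpa using hio 2 1
  have hxx : ⟪x,x⟫ = 1 := by simpa using hio 2 2
  -- compute l on basis
  have hlu : l u = (c/4 + α*γ - β^2) • u := by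
    simp only [hl, hR, hφu, hφw, hφx, hAu, hAw, hAx, map_add, map_sub, map_smul, map_zero,
      inner_add_left, inner_add_right, inner_sub_left, inner_sub_right,
      real_inner_smul_left, real_inner_smul_right, inner_zero_left, inner_zero_right,
      huu, huw, hux, hwu, hww, hwx, hxu, hxw, hxx]
    module

  have hlw : l w = (c/4 + α*μ) • w := by
    simp only [hl, hR, hφu, hφw, hφx, hAu, hAw, hAx, map_add, map_sub, map_smul, map_zero,
      inner_add_left, inner_add_right, inner_sub_left, inner_sub_right,
      real_inner_smul_left, real_inner_smul_right, inner_zero_left, inner_zero_right,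
      huu, huw, hux, hwu, hww, hwx, hxu, hxw, hxx]
    module
  have hlx : l x = 0 := by
    simp only [hl, hR, hφu, hφw, hφx, hAu, hAw, hAx, map_add, map_sub, map_smul, map_zero,
      inner_add_left, inner_add_right, inner_sub_left, inner_sub_right,
      real_inner_smul_left, real_inner_smul_right, inner_zero_left, inner_zero_right,
      huu, huw, hux, hwu, hww, hwx, hxu, hxw, hxx]
    module
  have key := congrArg (fun v => ⟪v, w⟫) (hpp w x u)
  simp only [hl, hR, hφu, hφw, hφx, hAu, hAw, hAx, map_add, map_sub, map_smul, map_zero,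
    map_neg, inner_neg_left, inner_neg_right, smul_neg, neg_smul,
    inner_add_left, inner_add_right, inner_sub_left, inner_sub_right,
    real_inner_smul_left, real_inner_smul_right, inner_zero_left, inner_zero_right,
    huu, huw, hux, hwu, hww, hwx, hxu, hxw, hxx] at key
  ring_nf at key
  have hαμ : α * μ = -(c/4) := by rw [hμ]; field_simp
  have hμ0 : μ ≠ 0 := by
    rw [hμ]
    exact div_ne_zero (neg_ne_zero.mpr hc) (mul_ne_zero four_ne_zero hα)
  have hfac : β * μ * (α * γ - α * μ - β ^ 2) = 0 := by linear_combination key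
  have hk : α * γ - α * μ - β ^ 2 = 0 := by
    rcases mul_eq_zero.mp hfac with h | h
    · exact absurd h (mul_ne_zero hβ hμ0)
    · exact h
  have hγ : γ = β ^ 2 / α - c / (4 * α) := by
    have h1 : γ = μ + β ^ 2 / α := by
      field_simp
      linear_combination hk
    rw [h1, hμ]; ring
  refine ⟨hγ, ?_⟩
  have hlu0 : l u = 0 := by
    rw [hlu]
    have : c / 4 + α * γ - β ^ 2 = 0 := by linear_combination hk + hαμ
    rw [this, zero_smul]
  have hlw0 : l w = 0 := by
    rw [hlw]
    have : c / 4 + α * μ = 0 := by linear_combination hαμ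
    rw [this, zero_smul]
  have hld : ∀ (a b d : ℝ), l (a • u + b • w + d • x)
      = a • l u + b • l w + d • l x := by
    intro a b d
    simp only [hl, hR, hφu, hφw, hφx, hAu, hAw, hAx, map_add, map_sub, map_smul, map_zero,
      inner_add_left, inner_add_right, inner_sub_left, inner_sub_right,
      real_inner_smul_left, real_inner_smul_right, inner_zero_left, inner_zero_right,
      huu, huw, hux, hwu, hww, hwx, hxu, hxw, hxx]
    module
  intro X
  have hcard : Fintype.card (Fin 3) = Module.finrank ℝ V := by simp [hdim]
  set b := basisOfOrthonormalOfCardEqFinrank hon hcard with hbdef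
  have hb : ⇑b = ![u, w, x] := coe_basisOfOrthonormalOfCardEqFinrank hon hcard
  have hXd : X = b.repr X 0 • u + b.repr X 1 • w + b.repr X 2 • x := by
    have hs := b.sum_repr X
    rw [Fin.sum_univ_three] at hs
    simp only [hb, Matrix.cons_val_zero, Matrix.cons_val_one, Matrix.head_cons,
      Matrix.cons_val_two, Matrix.tail_cons] at hs
    exact hs.symm
  rw [hXd, hld, hlu0, hlw0, hlx, smul_zero, smul_zero, smul_zero, add_zero, add_zero]
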